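/- If N = e^F where F(t) = ∑_{n≥1} a_n t^n with a_1 = 1, a_n ≥ 0 for all n, and ∑ a_n < ∞, then the deformed factorial f_n := ∫_0^∞ q_n(η) e^{−η} dη satisfies f_n ≥ x_n! for all n, where x_n! = n!/B_n(a_1,…,a_n) and q_n is the associated polynomial. -/

import Mathlib

open PowerSeries Finset

/-- Formal exponential of a power series (intended for series with zero constant term):
coefficientwise `exp F = ∑_k F^k / k!`, which is a finite sum in each coefficient. -/
noncomputable def expS (F : PowerSeries ℝ) : PowerSeries ℝ :=
  PowerSeries.mk fun n => ∑ k ∈ Finset.range (n + 1),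
    (1 / (k.factorial : ℝ)) * PowerSeries.coeff n (F ^ k)

/-- Formal logarithm of a power series (intended for series with constant term 1):
coefficientwise `log N = ∑_{k≥1} (-1)^{k+1} (N-1)^k / k`. -/
noncomputable def logS (N : PowerSeries ℝ) : PowerSeries ℝ :=
  PowerSeries.mk fun n => ∑ k ∈ Finset.range (n + 1),
    ((-1 : ℝ) ^ (k + 1) / (k : ℝ)) * PowerSeries.coeff n ((N - 1) ^ k)

/-- The formal power `N^η := exp (η · log N)`. -/
noncomputable def powS (N : PowerSeries ℝ) (η : ℝ) : PowerSeries ℝ :=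
  expS (η • logS N)

/-- Deformed factorial `x_n! = x_1 x_2 ⋯ x_n`, with `x_0! = 1`. -/
noncomputable def xfac (x : ℕ → ℝ) (n : ℕ) : ℝ := ∏ k ∈ Finset.Icc 1 n, x k

lemma coeff_pow_eq_zero' {F : PowerSeries ℝ} (hF : constantCoeff F = 0) {m k : ℕ}
    (h : m < k) : coeff m (F ^ k) = 0 := by
  obtain ⟨G, rfl⟩ := X_dvd_iff.2 hF
  rw [mul_pow, coeff_X_pow_mul']
  rw [if_neg (by omega)]

lemma coeff_expS {F : PowerSeries ℝ} (hF : constantCoeff F = 0) {m M : ℕ} (h : m ≤ M) :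
    coeff m (expS F) = ∑ k ∈ range (M + 1), (1 / (k.factorial : ℝ)) * coeff m (F ^ k) := by
  rw [expS, coeff_mk]
  apply Finset.sum_subset (by intro x hx; simp at *; omega)
  intro k _ hk
  rw [coeff_pow_eq_zero' hF (by simp at hk; omega), mul_zero]

lemma coeff_mul_congr {A B C : PowerSeries ℝ} {n : ℕ}
    (h : ∀ m ≤ n, coeff m A = coeff m B) :
    coeff n (A * C) = coeff n (B * C) := by
  rw [coeff_mul, coeff_mul]
  refine Finset.sum_congr rfl fun p hp => ?_
  rw [Finset.HasAntidiagonal.mem_antidiagonal] at hp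
  rw [h p.1 (by omega)]

lemma coeff_mul_eq_zero {A C : PowerSeries ℝ} {n : ℕ}
    (h : ∀ m ≤ n, coeff m A = 0) : coeff n (A * C) = 0 := by
  rw [coeff_mul]
  refine Finset.sum_eq_zero fun p hp => ?_
  rw [Finset.HasAntidiagonal.mem_antidiagonal] at hp
  rw [h p.1 (by omega), zero_mul]

lemma coeff_sum_smul (s : Finset ℕ) (c : ℕ → ℝ) (g : ℕ → PowerSeries ℝ) (m : ℕ) :
    coeff m (∑ k ∈ s, c k • g k) = ∑ k ∈ s, c k * coeff m (g k) := by
  rw [map_sum]; exact Finset.sum_congr rfl fun k _ => by rw [map_smul, smul_eq_mul]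

lemma derivative_expS {F : PowerSeries ℝ} (hF : constantCoeff F = 0) :
    d⁄dX ℝ (expS F) = d⁄dX ℝ F * expS F := by
  ext n
  set S : PowerSeries ℝ := ∑ k ∈ range (n + 2), (1 / (k.factorial : ℝ)) • F ^ k with hS
  have hagree : ∀ m ≤ n, coeff m (expS F) = coeff m S := fun m hm => by
    rw [hS, coeff_sum_smul, coeff_expS hF (by omega : m ≤ n + 1)]
  rw [mul_comm, coeff_mul_congr hagree]
  -- coeff of each F^k * F'
  have hk : ∀ k : ℕ, ((k : ℝ) + 1) * coeff n (F ^ k * d⁄dX ℝ F) =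
      coeff (n + 1) (F ^ (k + 1)) * (n + 1) := by
    intro k
    have h1 : d⁄dX ℝ (F ^ (k + 1)) = (k + 1) • (F ^ k * d⁄dX ℝ F) := by
      rw [Derivation.leibniz_pow]
      simp [smul_eq_mul]
    have h2 := PowerSeries.coeff_derivative (F ^ (k + 1)) n
    rw [h1, map_nsmul] at h2
    rw [← h2, nsmul_eq_mul]
    push_cast
    ring
  have hSF : coeff n (S * d⁄dX ℝ F) =
      ∑ k ∈ range (n + 2), (1 / (k.factorial : ℝ)) *
        (coeff (n + 1) (F ^ (k + 1)) * (n + 1) / ((k : ℝ) + 1)) := by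
    rw [hS, Finset.sum_mul]
    have : ∀ k ∈ range (n + 2), ((1 / (k.factorial : ℝ)) • F ^ k) * d⁄dX ℝ F
        = (1 / (k.factorial : ℝ)) • (F ^ k * d⁄dX ℝ F) := fun k _ => smul_mul_assoc _ _ _
    rw [Finset.sum_congr rfl this, coeff_sum_smul]
    refine Finset.sum_congr rfl fun k _ => ?_
    have hk' := hk k
    have hne : ((k : ℝ) + 1) ≠ 0 := by positivity
    field_simp
    linear_combination hk'
  rw [hSF, PowerSeries.coeff_derivative, coeff_expS hF (le_refl (n + 1))]
  -- now a pure sum identity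
  rw [Finset.sum_mul, Finset.sum_range_succ' (fun k => (1 / (k.factorial : ℝ)) *
      coeff (n+1) (F ^ k) * ((n:ℝ) + 1)) (n + 1),
    Finset.sum_range_succ (fun k => (1 / (k.factorial : ℝ)) *
      (coeff (n + 1) (F ^ (k + 1)) * ((n:ℝ) + 1) / ((k : ℝ) + 1))) (n + 1)]
  rw [coeff_pow_eq_zero' hF (by omega : n + 1 < n + 1 + 1)]
  simp only [pow_zero, coeff_one, Nat.factorial_zero, Nat.cast_one, mul_zero, zero_mul, add_zero,
    if_neg (Nat.succ_ne_zero n), zero_div, mul_zero, zero_mul]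
  refine Finset.sum_congr rfl fun k _ => ?_
  rw [Nat.factorial_succ]
  have h1 : ((k.factorial : ℝ)) ≠ 0 := Nat.cast_ne_zero.2 k.factorial_ne_zero
  have h2 : ((k : ℝ) + 1) ≠ 0 := by positivity
  push_cast
  field_simp

lemma coeff_logS {N : PowerSeries ℝ} (hN : constantCoeff (N - 1) = 0) {m M : ℕ} (h : m ≤ M) :
    coeff m (logS N) = ∑ k ∈ range (M + 1),
      ((-1 : ℝ) ^ (k + 1) / (k : ℝ)) * coeff m ((N - 1) ^ k) := by
  rw [logS, coeff_mk]
  apply Finset.sum_subset (by intro x hx; simp at *; omega)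
  intro k _ hk
  rw [coeff_pow_eq_zero' hN (by simp at hk; omega), mul_zero]

lemma derivative_logS_mul {N : PowerSeries ℝ} (hN : constantCoeff (N - 1) = 0) :
    d⁄dX ℝ (logS N) * N = d⁄dX ℝ N := by
  ext n
  set G := N - 1 with hG
  set T : PowerSeries ℝ := ∑ k ∈ range (n + 3), ((-1 : ℝ) ^ (k + 1) / (k : ℝ)) • G ^ k with hT
  have hagree : ∀ m ≤ n, coeff m (d⁄dX ℝ (logS N)) = coeff m (d⁄dX ℝ T) := by
    intro m hm
    rw [PowerSeries.coeff_derivative, PowerSeries.coeff_derivative,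
      coeff_logS hN (by omega : m + 1 ≤ n + 2), hT, coeff_sum_smul]
  rw [coeff_mul_congr hagree]
  -- compute d⁄dX T
  set P : PowerSeries ℝ := ∑ j ∈ range (n + 2), (-G) ^ j with hP
  have hdT : d⁄dX ℝ T = P * d⁄dX ℝ G := by
    rw [hT, map_sum]
    have h1 : ∀ k ∈ range (n + 3), d⁄dX ℝ (((-1 : ℝ) ^ (k + 1) / (k : ℝ)) • G ^ k)
        = (((-1 : ℝ) ^ (k + 1) / (k : ℝ)) * k) • (G ^ (k - 1) * d⁄dX ℝ G) := by
      intro k _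
      rw [Derivation.map_smul, Derivation.leibniz_pow, smul_eq_mul,
        ← Nat.cast_smul_eq_nsmul ℝ, smul_smul]
    rw [Finset.sum_congr rfl h1, Finset.sum_range_succ']
    simp only [Nat.cast_zero, div_zero, zero_mul, zero_smul, add_zero, Nat.add_sub_cancel]
    have h2 : ∀ j ∈ range (n + 2), ((-1 : ℝ) ^ (j + 1 + 1) / ((j + 1 : ℕ) : ℝ) *
        ((j + 1 : ℕ) : ℝ)) • (G ^ j * d⁄dX ℝ G) = (-G) ^ j * d⁄dX ℝ G := by
      intro j _
      have hne : (((j + 1 : ℕ)) : ℝ) ≠ 0 := by positivity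
      rw [div_mul_cancel₀ _ hne]
      have hsign : (-1 : ℝ) ^ (j + 1 + 1) = (-1 : ℝ) ^ j := by
        rw [pow_succ, pow_succ]; ring
      rw [hsign, ← smul_mul_assoc, ← smul_pow, neg_one_smul]
    rw [hP, Finset.sum_mul]
    exact Finset.sum_congr rfl h2
  have hPN : P * N = 1 - (-G) ^ (n + 2) := by
    have := geom_sum_mul (-G) (n + 2)
    have hN' : -G - 1 = -N := by rw [hG]; ring
    have h3 : P * (-G - 1) = (-G) ^ (n + 2) - 1 := this
    rw [hN'] at h3
    have : P * N = -((-G) ^ (n + 2) - 1) := by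
      rw [← neg_eq_iff_eq_neg]
      rw [← h3]; ring
    rw [this]; ring
  have hdG : d⁄dX ℝ G = d⁄dX ℝ N := by rw [hG, map_sub]; simp
  calc coeff n (d⁄dX ℝ T * N) = coeff n ((1 - (-G) ^ (n + 2)) * d⁄dX ℝ G) := by
        rw [hdT]; rw [show P * d⁄dX ℝ G * N = P * N * d⁄dX ℝ G by ring, hPN]
    _ = coeff n (d⁄dX ℝ G) - coeff n ((-G) ^ (n + 2) * d⁄dX ℝ G) := by
        rw [sub_mul, one_mul, map_sub]
    _ = coeff n (d⁄dX ℝ N) := by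
        rw [hdG, coeff_mul_eq_zero (fun m hm => coeff_pow_eq_zero'
          (by rw [map_neg, hN, neg_zero]) (by omega)), sub_zero]

lemma constantCoeff_expS (F : PowerSeries ℝ) : constantCoeff (expS F) = 1 := by
  rw [← coeff_zero_eq_constantCoeff, expS, coeff_mk]
  simp

lemma constantCoeff_logS (N : PowerSeries ℝ) : constantCoeff (logS N) = 0 := by
  rw [← coeff_zero_eq_constantCoeff, logS, coeff_mk]
  simp

lemma logS_expS {F : PowerSeries ℝ} (hF : constantCoeff F = 0) : logS (expS F) = F := by
  have hE1 : constantCoeff (expS F - 1) = 0 := by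
    rw [map_sub, constantCoeff_expS]; simp
  have h2 := derivative_logS_mul hE1
  rw [derivative_expS hF] at h2
  have hEne : expS F ≠ 0 := by
    intro h
    have := constantCoeff_expS F
    rw [h, map_zero] at this
    norm_num at this
  have h3 : d⁄dX ℝ (logS (expS F)) = d⁄dX ℝ F := mul_right_cancel₀ hEne h2
  exact PowerSeries.derivative.ext h3 (by rw [constantCoeff_logS, hF])

lemma coeff_pow_nonneg {F : PowerSeries ℝ} (h : ∀ m, 0 ≤ coeff m F) (k m : ℕ) :
    0 ≤ coeff m (F ^ k) := by
  induction k generalizing m with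
  | zero => simp [coeff_one]; positivity
  | succ k ih =>
    rw [pow_succ, coeff_mul]
    exact Finset.sum_nonneg fun p _ => mul_nonneg (ih p.1) (h p.2)

lemma coeff_pow_self {F : PowerSeries ℝ} (hF : constantCoeff F = 0) (n : ℕ) :
    coeff n (F ^ n) = (coeff 1 F) ^ n := by
  obtain ⟨G, rfl⟩ := X_dvd_iff.2 hF
  rw [mul_pow]
  have := coeff_X_pow_mul (G ^ n) n 0
  rw [zero_add] at this
  rw [this, coeff_zero_eq_constantCoeff, map_pow]
  congr 1
  rw [coeff_succ_X_mul, coeff_zero_eq_constantCoeff]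

open MeasureTheory in
lemma integrableOn_pow_exp (k : ℕ) :
    IntegrableOn (fun x : ℝ => x ^ k * Real.exp (-x)) (Set.Ioi 0) := by
  have h := Real.GammaIntegral_convergent (s := (k : ℝ) + 1) (by positivity)
  apply h.congr_fun ?_ measurableSet_Ioi
  intro x hx
  rw [Set.mem_Ioi] at hx
  simp only []
  rw [show ((k : ℝ) + 1 - 1) = ((k:ℕ) : ℝ) by push_cast; ring, Real.rpow_natCast]
  ring

open MeasureTheory in
lemma integral_pow_exp (k : ℕ) :
    ∫ x in Set.Ioi (0:ℝ), x ^ k * Real.exp (-x) = (k.factorial : ℝ) := by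
  have h1 := Real.Gamma_eq_integral (s := (k : ℝ) + 1) (by positivity)
  have h2 : Real.Gamma ((k : ℝ) + 1) = (k.factorial : ℝ) := by
    exact_mod_cast Real.Gamma_nat_eq_factorial k
  rw [h2] at h1
  rw [h1]
  apply setIntegral_congr_fun measurableSet_Ioi
  intro x hx
  rw [Set.mem_Ioi] at hx
  simp only []
  rw [show ((k : ℝ) + 1 - 1) = ((k:ℕ) : ℝ) by push_cast; ring, Real.rpow_natCast]
  ring

open MeasureTheory

theorem stmt18 (a : ℕ → ℝ) (ha0 : a 0 = 0) (ha1 : a 1 = 1) (ha : ∀ n, 0 ≤ a n)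
    (hsum : Summable a)
    (N : PowerSeries ℝ) (hN : N = expS (PowerSeries.mk a))
    (xf : ℕ → ℝ) (hxf : ∀ n, xf n = (PowerSeries.coeff n N)⁻¹)
    (q : ℕ → ℝ → ℝ)
    (hq : ∀ n η, q n η = xf n * PowerSeries.coeff n (powS N η))
    (f : ℕ → ℝ)
    (hf : ∀ n, f n = ∫ η in Set.Ioi (0 : ℝ), q n η * Real.exp (-η)) :
    ∀ n : ℕ, xf n ≤ f n := by
  intro n
  set F : PowerSeries ℝ := PowerSeries.mk a with hF
  have hFco : ∀ m, coeff m F = a m := fun m => coeff_mk m a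
  have hFcc : constantCoeff F = 0 := by
    rw [← coeff_zero_eq_constantCoeff, hFco, ha0]
  have hL : logS N = F := by rw [hN]; exact logS_expS hFcc
  set b : ℕ → ℝ := fun k => (1 / (k.factorial : ℝ)) * coeff n (F ^ k) with hb
  have hbnonneg : ∀ k, 0 ≤ b k := fun k =>
    mul_nonneg (by positivity) (coeff_pow_nonneg (fun m => (hFco m) ▸ ha m) k n)
  have hcoeffpow : ∀ η : ℝ, coeff n (powS N η) = ∑ k ∈ range (n + 1), b k * η ^ k := by
    intro η
    rw [powS, hL, expS, coeff_mk]
    refine Finset.sum_congr rfl fun k _ => ?_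
    rw [smul_pow, _root_.map_smul, smul_eq_mul, hb]
    ring
  have hbn : b n = 1 / (n.factorial : ℝ) := by
    rw [hb]
    simp only []
    rw [coeff_pow_self hFcc, hFco, ha1, one_pow, mul_one]
  have hxfnonneg : 0 ≤ xf n := by
    rw [hxf, hN]
    apply inv_nonneg.2
    rw [coeff_expS hFcc (le_refl n)]
    exact Finset.sum_nonneg fun k _ =>
      mul_nonneg (by positivity) (coeff_pow_nonneg (fun m => (hFco m) ▸ ha m) k n)
  have hfn : f n = ∑ k ∈ range (n + 1), xf n * b k * (k.factorial : ℝ) := by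
    rw [hf n]
    have hintg : ∀ η : ℝ, q n η * Real.exp (-η) =
        ∑ k ∈ range (n + 1), xf n * b k * (η ^ k * Real.exp (-η)) := by
      intro η
      rw [hq, hcoeffpow, Finset.mul_sum, Finset.sum_mul]
      exact Finset.sum_congr rfl fun k _ => by ring
    simp only [hintg]
    rw [integral_finset_sum _ (fun k _ => ((integrableOn_pow_exp k).const_mul _))]
    refine Finset.sum_congr rfl fun k _ => ?_
    rw [MeasureTheory.integral_const_mul, integral_pow_exp]
  rw [hfn]
  have key : xf n * b n * (n.factorial : ℝ) = xf n := by
    rw [hbn]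
    have : (n.factorial : ℝ) ≠ 0 := Nat.cast_ne_zero.2 n.factorial_ne_zero
    field_simp
  calc xf n = xf n * b n * (n.factorial : ℝ) := key.symm
    _ ≤ ∑ k ∈ range (n + 1), xf n * b k * (k.factorial : ℝ) :=
        Finset.single_le_sum (f := fun k => xf n * b k * (k.factorial : ℝ))
          (fun k _ => mul_nonneg (mul_nonneg hxfnonneg (hbnonneg k)) (by positivity))
          (Finset.self_mem_range_succ n)
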